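/- arXiv:2308.00509 — 2 statements merged into one kernel-verified Lean document; each statement's English description precedes it below -/
import Mathlib

section
/- For any Boolean function f : {-1,1}^n → {-1,1}, E_x[|𝒫(x)|²] = ∑_S |S|² f̂(S)², i.e., the second moment of the pivotal set size equals the second moment of the spectral sample size. -/
open Finset

noncomputable def bSgn (b : Bool) : ℝ := if b then 1 else -1

noncomputable def bChi {n : ℕ} (S : Finset (Fin n)) (x : Fin n → Bool) : ℝ :=
  ∏ i ∈ S, bSgn (x i)

noncomputable def bExpect {n : ℕ} (g : (Fin n → Bool) → ℝ) : ℝ :=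
  (∑ x : Fin n → Bool, g x) / 2 ^ n

noncomputable def bFourier {n : ℕ} (f : (Fin n → Bool) → ℝ) (S : Finset (Fin n)) : ℝ :=
  bExpect fun x => f x * bChi S x

def bFlip1 {n : ℕ} (k : Fin n) (x : Fin n → Bool) : Fin n → Bool :=
  Function.update x k (!(x k))

def bFlipS {n : ℕ} (T : Finset (Fin n)) (x : Fin n → Bool) : Fin n → Bool :=
  fun i => if i ∈ T then !(x i) else x i

/-- combinatorial influence of bit `k` -/
noncomputable def inflC {n : ℕ} (f : (Fin n → Bool) → ℝ) (k : Fin n) : ℝ :=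
  bExpect fun x => if f x ≠ f (bFlip1 k x) then 1 else 0

/-- spectral influence of bit `k` -/
noncomputable def inflS {n : ℕ} (f : (Fin n → Bool) → ℝ) (k : Fin n) : ℝ :=
  ∑ S ∈ univ.filter (fun S : Finset (Fin n) => k ∈ S), bFourier f S ^ 2

/-- total influence (spectral form) -/
noncomputable def totInfl {n : ℕ} (f : (Fin n → Bool) → ℝ) : ℝ :=
  ∑ S : Finset (Fin n), (S.card : ℝ) * bFourier f S ^ 2

/-- spectrum entropy, base 2; terms with zero coefficient contribute 0 -/
noncomputable def specEnt {n : ℕ} (f : (Fin n → Bool) → ℝ) : ℝ :=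
  ∑ S : Finset (Fin n), bFourier f S ^ 2 * Real.logb 2 (1 / bFourier f S ^ 2)

/-- `f` is Boolean (±1)-valued -/
def IsBooleanFn {n : ℕ} (f : (Fin n → Bool) → ℝ) : Prop :=
  ∀ x, f x = 1 ∨ f x = -1

section Aux

lemma bSgn_mul_self (b : Bool) : bSgn b * bSgn b = 1 := by cases b <;> simp [bSgn]

lemma bSgn_not (b : Bool) : bSgn (!b) = - bSgn b := by cases b <;> simp [bSgn]

lemma bChi_eq_prod_univ {n : ℕ} (S : Finset (Fin n)) (x : Fin n → Bool) :
    bChi S x = ∏ i : Fin n, (if i ∈ S then bSgn (x i) else 1) := by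
  rw [Finset.prod_ite_mem, Finset.univ_inter]; rfl

lemma bChi_mul {n : ℕ} (S T : Finset (Fin n)) (x : Fin n → Bool) :
    bChi S x * bChi T x = bChi (symmDiff S T) x := by
  rw [bChi_eq_prod_univ, bChi_eq_prod_univ, bChi_eq_prod_univ, ← Finset.prod_mul_distrib]
  apply Finset.prod_congr rfl
  intro i _
  by_cases hS : i ∈ S <;> by_cases hT : i ∈ T <;>
    simp [hS, hT, Finset.mem_symmDiff, bSgn_mul_self]

lemma bFlip1_invol {n : ℕ} (k : Fin n) : Function.Involutive (bFlip1 k) := by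
  intro x
  funext i
  by_cases h : i = k
  · subst h; simp [bFlip1]
  · simp [bFlip1, Function.update_of_ne h]

lemma bChi_bFlip1 {n : ℕ} (S : Finset (Fin n)) (k : Fin n) (x : Fin n → Bool) :
    bChi S (bFlip1 k x) = (if k ∈ S then -1 else 1) * bChi S x := by
  by_cases hk : k ∈ S
  · rw [if_pos hk]
    unfold bChi
    rw [← Finset.mul_prod_erase S _ hk, ← Finset.mul_prod_erase S (fun i => bSgn (x i)) hk]
    have h1 : bSgn (bFlip1 k x k) = - bSgn (x k) := by simp [bFlip1, bSgn_not]
    have h2 : ∀ i ∈ S.erase k, bSgn (bFlip1 k x i) = bSgn (x i) := by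
      intro i hi
      have hne : i ≠ k := Finset.ne_of_mem_erase hi
      simp [bFlip1, Function.update_of_ne hne]
    rw [Finset.prod_congr rfl h2, h1]
    ring
  · rw [if_neg hk, one_mul]
    apply Finset.prod_congr rfl
    intro i hi
    have hne : i ≠ k := fun h => hk (h ▸ hi)
    simp [bFlip1, Function.update_of_ne hne]

lemma sum_bChi {n : ℕ} (S : Finset (Fin n)) :
    ∑ x : Fin n → Bool, bChi S x = if S = ∅ then (2:ℝ)^n else 0 := by
  by_cases h : S = ∅
  · subst h
    simp [bChi, Finset.card_univ]
  · rw [if_neg h]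
    obtain ⟨k, hk⟩ := Finset.nonempty_of_ne_empty h
    have hbij : Function.Bijective (bFlip1 k) := (bFlip1_invol k).bijective
    have hsum : ∑ x : Fin n → Bool, bChi S (bFlip1 k x) = ∑ x : Fin n → Bool, bChi S x :=
      Fintype.sum_bijective _ hbij _ _ (fun x => rfl)
    have hneg : ∀ x : Fin n → Bool, bChi S (bFlip1 k x) = - bChi S x := by
      intro x; rw [bChi_bFlip1, if_pos hk]; ring
    simp_rw [hneg] at hsum
    rw [Finset.sum_neg_distrib] at hsum
    linarith

lemma sum_bChi_mul {n : ℕ} (S T : Finset (Fin n)) :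
    ∑ x : Fin n → Bool, bChi S x * bChi T x = if S = T then (2:ℝ)^n else 0 := by
  simp_rw [bChi_mul]
  rw [sum_bChi]
  congr 1
  simp [← Finset.bot_eq_empty, symmDiff_eq_bot]

lemma sum_chi_chi_pt {n : ℕ} (x y : Fin n → Bool) :
    ∑ S : Finset (Fin n), bChi S y * bChi S x = if y = x then (2:ℝ)^n else 0 := by
  have h1 : ∀ S : Finset (Fin n), bChi S y * bChi S x
      = ∏ i ∈ S, (bSgn (y i) * bSgn (x i)) := by
    intro S; rw [bChi, bChi, ← Finset.prod_mul_distrib]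
  simp_rw [h1]
  have h2 : ∑ S : Finset (Fin n), ∏ i ∈ S, (bSgn (y i) * bSgn (x i))
      = ∏ i : Fin n, (bSgn (y i) * bSgn (x i) + 1) := by
    rw [Finset.prod_add, ← Finset.powerset_univ]
    apply Finset.sum_congr rfl
    intro t _
    simp
  rw [h2]
  by_cases h : y = x
  · subst h
    rw [if_pos rfl]
    have h3 : ∀ i : Fin n, bSgn (y i) * bSgn (y i) + 1 = 2 := by
      intro i; rw [bSgn_mul_self]; norm_num
    simp_rw [h3]
    simp
  · rw [if_neg h]
    have : ∃ i, y i ≠ x i := by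
      by_contra hc
      push_neg at hc
      exact h (funext hc)
    obtain ⟨i, hi⟩ := this
    apply Finset.prod_eq_zero (Finset.mem_univ i)
    revert hi
    cases hy : y i <;> cases hx : x i <;> simp [bSgn]

lemma bFourier_inversion {n : ℕ} (f : (Fin n → Bool) → ℝ) (x : Fin n → Bool) :
    f x = ∑ S : Finset (Fin n), bFourier f S * bChi S x := by
  have h2n : (2:ℝ)^n ≠ 0 := by positivity
  have step : ∑ S : Finset (Fin n), bFourier f S * bChi S x
      = (∑ y : Fin n → Bool, f y * (if y = x then (2:ℝ)^n else 0)) / 2^n := by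
    unfold bFourier bExpect
    simp_rw [div_mul_eq_mul_div, Finset.sum_mul, mul_assoc, ← Finset.sum_div,
      ← sum_chi_chi_pt, Finset.mul_sum]
    congr 1
    exact Finset.sum_comm
  rw [step]
  simp_rw [mul_ite, mul_zero]
  rw [Finset.sum_ite_eq' Finset.univ x (fun y => f y * 2^n)]
  simp [mul_div_assoc, div_self h2n]

lemma pivotal_indicator {n : ℕ} (f : (Fin n → Bool) → ℝ) (hf : IsBooleanFn f)
    (x : Fin n → Bool) (k : Fin n) :
    (if f x ≠ f (bFlip1 k x) then (1:ℝ) else 0)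
      = f x * ∑ S ∈ univ.filter (fun S : Finset (Fin n) => k ∈ S),
          bFourier f S * bChi S x := by
  have hexp : f x - f (bFlip1 k x)
      = 2 * ∑ S ∈ univ.filter (fun S : Finset (Fin n) => k ∈ S),
          bFourier f S * bChi S x := by
    rw [bFourier_inversion f x, bFourier_inversion f (bFlip1 k x),
      ← Finset.sum_sub_distrib, Finset.mul_sum, Finset.sum_filter]
    apply Finset.sum_congr rfl
    intro S _
    rw [bChi_bFlip1]
    by_cases h : k ∈ S <;> simp [h] <;> ring
  set A := ∑ S ∈ univ.filter (fun S : Finset (Fin n) => k ∈ S),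
      bFourier f S * bChi S x with hA
  rcases hf x with h1 | h1 <;> rcases hf (bFlip1 k x) with h2 | h2 <;>
    rw [h1, h2] at hexp ⊢ <;> norm_num <;> linarith

lemma pivotal_count {n : ℕ} (f : (Fin n → Bool) → ℝ) (hf : IsBooleanFn f)
    (x : Fin n → Bool) :
    ((univ.filter (fun k : Fin n => f x ≠ f (bFlip1 k x))).card : ℝ)
      = f x * ∑ S : Finset (Fin n), (S.card : ℝ) * bFourier f S * bChi S x := by
  rw [Finset.card_filter]
  push_cast
  rw [Finset.sum_congr rfl (fun k _ => pivotal_indicator f hf x k), ← Finset.mul_sum]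
  congr 1
  simp_rw [Finset.sum_filter]
  rw [Finset.sum_comm]
  apply Finset.sum_congr rfl
  intro S _
  rw [Finset.sum_ite_mem, Finset.univ_inter, Finset.sum_const, nsmul_eq_mul]
  ring

theorem pivotal_second_moment (n : ℕ) (f : (Fin n → Bool) → ℝ)
    (hf : IsBooleanFn f) :
    bExpect (fun x =>
        ((univ.filter (fun k : Fin n => f x ≠ f (bFlip1 k x))).card : ℝ) ^ 2)
      = ∑ S : Finset (Fin n), (S.card : ℝ) ^ 2 * bFourier f S ^ 2 := by
  have hsq : ∀ x : Fin n → Bool,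
      ((univ.filter (fun k : Fin n => f x ≠ f (bFlip1 k x))).card : ℝ) ^ 2
        = (∑ S : Finset (Fin n), ((S.card : ℝ) * bFourier f S) * bChi S x) ^ 2 := by
    intro x
    rw [pivotal_count f hf x, mul_pow]
    have : f x ^ 2 = 1 := by rcases hf x with h | h <;> rw [h] <;> norm_num
    rw [this, one_mul]
  have key : bExpect (fun x =>
      (∑ S : Finset (Fin n), ((S.card : ℝ) * bFourier f S) * bChi S x) ^ 2)
      = ∑ S : Finset (Fin n), ((S.card : ℝ) * bFourier f S) ^ 2 := by
    unfold bExpect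
    have expand : ∀ x : Fin n → Bool,
        (∑ S : Finset (Fin n), ((S.card : ℝ) * bFourier f S) * bChi S x) ^ 2
        = ∑ S : Finset (Fin n), ∑ T : Finset (Fin n),
            ((S.card : ℝ) * bFourier f S) * ((T.card : ℝ) * bFourier f T)
              * (bChi S x * bChi T x) := by
      intro x
      rw [sq, Finset.sum_mul_sum]
      apply Finset.sum_congr rfl
      intro S _
      apply Finset.sum_congr rfl
      intro T _
      ring
    simp_rw [expand]
    rw [Finset.sum_comm]
    have inner : ∀ S : Finset (Fin n),
        ∑ x : Fin n → Bool, ∑ T : Finset (Fin n),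
            ((S.card : ℝ) * bFourier f S) * ((T.card : ℝ) * bFourier f T)
              * (bChi S x * bChi T x)
        = ((S.card : ℝ) * bFourier f S) ^ 2 * 2 ^ n := by
      intro S
      rw [Finset.sum_comm]
      have hT : ∀ T : Finset (Fin n),
          ∑ x : Fin n → Bool,
            ((S.card : ℝ) * bFourier f S) * ((T.card : ℝ) * bFourier f T)
              * (bChi S x * bChi T x)
          = ((S.card : ℝ) * bFourier f S) * ((T.card : ℝ) * bFourier f T)
              * (if S = T then (2:ℝ)^n else 0) := by
        intro T
        rw [← Finset.mul_sum, sum_bChi_mul]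
      simp_rw [hT, mul_ite, mul_zero]
      rw [Finset.sum_ite_eq Finset.univ S
        (fun T => ((S.card : ℝ) * bFourier f S) * ((T.card : ℝ) * bFourier f T) * 2 ^ n)]
      simp only [Finset.mem_univ, if_true]
      ring
    simp_rw [inner]
    rw [← Finset.sum_mul]
    have h2n : (2:ℝ)^n ≠ 0 := by positivity
    rw [mul_div_assoc, div_self h2n, mul_one]
  calc bExpect (fun x =>
        ((univ.filter (fun k : Fin n => f x ≠ f (bFlip1 k x))).card : ℝ) ^ 2)
      = bExpect (fun x =>
        (∑ S : Finset (Fin n), ((S.card : ℝ) * bFourier f S) * bChi S x) ^ 2) := by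
        unfold bExpect
        congr 1
        exact Finset.sum_congr rfl (fun x _ => hsq x)
    _ = ∑ S : Finset (Fin n), ((S.card : ℝ) * bFourier f S) ^ 2 := key
    _ = ∑ S : Finset (Fin n), (S.card : ℝ) ^ 2 * bFourier f S ^ 2 := by
        apply Finset.sum_congr rfl
        intros; ring
end Aux
end

section
/- There exist constants c₁, c₂ > 0 such that for every Boolean function f : {-1,1}^n → {-1,1}, the spectrum entropy satisfies Ent(f) ≤ c₁·I(f) + c₂·∑_{k∈[n]} −I_k(f)·log I_k(f) (terms with I_k(f) = 0 contribute 0). -/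
open Finset

lemma sum_chi_mul (n : ℕ) (x y : Fin n → Bool) :
    ∑ S : Finset (Fin n), bChi S x * bChi S y = if x = y then (2:ℝ)^n else 0 := by
  have h : ∑ S : Finset (Fin n), bChi S x * bChi S y
      = ∏ i : Fin n, (bSgn (x i) * bSgn (y i) + 1) := by
    rw [Finset.prod_add, Finset.powerset_univ]
    apply Finset.sum_congr rfl
    intro S _
    simp [bChi, Finset.prod_mul_distrib]
  rw [h]
  by_cases hxy : x = y
  · subst hxy
    simp [bSgn_mul_self]
    norm_num
  · simp only [if_neg hxy]
    obtain ⟨j, hj⟩ : ∃ j, x j ≠ y j := by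
      by_contra hc
      push_neg at hc
      exact hxy (funext hc)
    apply Finset.prod_eq_zero (Finset.mem_univ j)
    have : bSgn (x j) * bSgn (y j) = -1 := by
      cases hx : x j <;> cases hy : y j <;> simp_all [bSgn]
    rw [this]; ring

lemma parseval {n : ℕ} (f : (Fin n → Bool) → ℝ) (hf : IsBooleanFn f) :
    ∑ S : Finset (Fin n), bFourier f S ^ 2 = 1 := by
  have hsq : ∀ x, f x * f x = 1 := by
    intro x; rcases hf x with h | h <;> rw [h] <;> norm_num
  have key : ∑ S : Finset (Fin n), (∑ x : Fin n → Bool, f x * bChi S x) ^ 2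
      = (2:ℝ)^n * (2:ℝ)^n := by
    have h0 : ∀ S : Finset (Fin n), (∑ x : Fin n → Bool, f x * bChi S x) ^ 2
        = ∑ x : Fin n → Bool, ∑ y : Fin n → Bool,
            (f x * f y) * (bChi S x * bChi S y) := by
      intro S
      rw [sq, Finset.sum_mul_sum]
      apply Finset.sum_congr rfl; intro x _
      apply Finset.sum_congr rfl; intro y _; ring
    simp only [h0]
    rw [Finset.sum_comm]
    have h2 : ∀ x : Fin n → Bool, ∑ S : Finset (Fin n), ∑ y : Fin n → Bool,
        (f x * f y) * (bChi S x * bChi S y) = (2:ℝ)^n := by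
      intro x
      rw [Finset.sum_comm]
      have h1 : ∀ y : Fin n → Bool, ∑ S : Finset (Fin n),
          (f x * f y) * (bChi S x * bChi S y)
          = (f x * f y) * (if x = y then (2:ℝ)^n else 0) := by
        intro y
        rw [← Finset.mul_sum, sum_chi_mul]
      simp only [h1]
      rw [Finset.sum_eq_single x]
      · simp [hsq x]
      · intro y _ hy
        simp [Ne.symm hy]
      · simp
    simp only [h2]
    simp [Finset.card_univ]
  have h2n : ((2:ℝ)^n) ≠ 0 := by positivity
  have : ∀ S : Finset (Fin n), bFourier f S ^ 2
      = (∑ x : Fin n → Bool, f x * bChi S x) ^ 2 / ((2:ℝ)^n * (2:ℝ)^n) := by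
    intro S
    simp only [bFourier, bExpect, div_pow]
    congr 1
    rw [sq]
  simp only [this]
  rw [← Finset.sum_div, key]
  field_simp

lemma gibbs {ι : Type*} [Fintype ι] (p q : ι → ℝ)
    (hp : ∀ i, 0 ≤ p i) (hpq : ∀ i, q i = 0 → p i = 0) (hq : ∀ i, 0 ≤ q i)
    (hs : ∑ i, q i ≤ ∑ i, p i) :
    ∑ i, -(p i * Real.log (p i)) ≤ ∑ i, -(p i * Real.log (q i)) := by
  have key : ∑ i, (p i * Real.log (q i) - p i * Real.log (p i)) ≤ ∑ i, (q i - p i) := by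
    apply Finset.sum_le_sum
    intro i _
    by_cases hpi : p i = 0
    · simp [hpi, hq i]
    · have hp' : 0 < p i := lt_of_le_of_ne (hp i) (Ne.symm hpi)
      have hq' : 0 < q i := by
        rcases lt_or_eq_of_le (hq i) with h | h
        · exact h
        · exact absurd (hpq i h.symm) hpi
      have := Real.log_le_sub_one_of_pos (show 0 < q i / p i by positivity)
      have hlog : Real.log (q i / p i) = Real.log (q i) - Real.log (p i) :=
        Real.log_div (ne_of_gt hq') (ne_of_gt hp')
      rw [hlog] at this
      have := mul_le_mul_of_nonneg_left this (le_of_lt hp')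
      calc p i * Real.log (q i) - p i * Real.log (p i)
          = p i * (Real.log (q i) - Real.log (p i)) := by ring
        _ ≤ p i * (q i / p i - 1) := this
        _ = q i - p i := by field_simp
  have h2 : ∑ i, (q i - p i) ≤ 0 := by
    rw [Finset.sum_sub_distrib]
    linarith
  have h3 : ∑ i, (p i * Real.log (q i) - p i * Real.log (p i)) ≤ 0 := le_trans key h2
  rw [Finset.sum_sub_distrib] at h3
  simp only [Finset.sum_neg_distrib]
  linarith

lemma one_sub_entropy_le {x : ℝ} (h0 : 0 ≤ x) (h1 : x ≤ 1) :
    (1 - x) * (-(Real.log (1 - x))) ≤ x := by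
  set y := 1 - x with hy
  have hy0 : 0 ≤ y := by linarith
  by_cases hz : y = 0
  · simp [hz]; linarith
  · have hy' : 0 < y := lt_of_le_of_ne hy0 (Ne.symm hz)
    have := Real.log_le_sub_one_of_pos (show 0 < y⁻¹ by positivity)
    rw [Real.log_inv] at this
    have h2 : -Real.log y ≤ y⁻¹ - 1 := this
    have := mul_le_mul_of_nonneg_left h2 hy0
    calc y * (-(Real.log y)) ≤ y * (y⁻¹ - 1) := this
      _ = 1 - y := by field_simp
      _ = x := by rw [hy]; ring

lemma p_le_I {n : ℕ} (f : (Fin n → Bool) → ℝ) {k : Fin n} {S : Finset (Fin n)} (hk : k ∈ S) :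
    bFourier f S ^ 2 ≤ inflS f k :=
  Finset.single_le_sum (f := fun S => bFourier f S ^ 2)
    (fun _ _ => sq_nonneg _) (by simp [hk])

lemma inflS_nonneg {n : ℕ} (f : (Fin n → Bool) → ℝ) (k : Fin n) : 0 ≤ inflS f k :=
  Finset.sum_nonneg fun _ _ => sq_nonneg _

lemma sum_not_mem {n : ℕ} (f : (Fin n → Bool) → ℝ) (hf : IsBooleanFn f) (k : Fin n) :
    ∑ S ∈ univ.filter (fun S : Finset (Fin n) => k ∉ S), bFourier f S ^ 2
      = 1 - inflS f k := by
  have := Finset.sum_filter_add_sum_filter_not Finset.univ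
    (fun S : Finset (Fin n) => k ∈ S) (fun S => bFourier f S ^ 2)
  rw [parseval f hf] at this
  rw [inflS]
  linarith

lemma inflS_le_one {n : ℕ} (f : (Fin n → Bool) → ℝ) (hf : IsBooleanFn f) (k : Fin n) :
    inflS f k ≤ 1 := by
  have h := sum_not_mem f hf k
  have h2 : (0:ℝ) ≤ ∑ S ∈ univ.filter (fun S : Finset (Fin n) => k ∉ S), bFourier f S ^ 2 :=
    Finset.sum_nonneg fun _ _ => sq_nonneg _
  linarith

lemma p_le_one_sub {n : ℕ} (f : (Fin n → Bool) → ℝ) (hf : IsBooleanFn f)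
    {k : Fin n} {S : Finset (Fin n)} (hk : k ∉ S) :
    bFourier f S ^ 2 ≤ 1 - inflS f k := by
  rw [← sum_not_mem f hf k]
  exact Finset.single_le_sum (f := fun S => bFourier f S ^ 2)
    (fun _ _ => sq_nonneg _) (by simp [hk])

noncomputable def qdist {n : ℕ} (f : (Fin n → Bool) → ℝ) (S : Finset (Fin n)) : ℝ :=
  ∏ k : Fin n, (if k ∈ S then inflS f k else 1 - inflS f k)

lemma qdist_sum {n : ℕ} (f : (Fin n → Bool) → ℝ) :
    ∑ S : Finset (Fin n), qdist f S = 1 := by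
  have h : ∀ S : Finset (Fin n), qdist f S
      = (∏ k ∈ S, inflS f k) * ∏ k ∈ univ \ S, (1 - inflS f k) := by
    intro S
    rw [qdist, Finset.prod_ite]
    congr 1
    · congr 1; ext k; simp
    · congr 1; ext k; simp
  simp only [h]
  have := Finset.prod_add (fun k : Fin n => inflS f k)
    (fun k : Fin n => 1 - inflS f k) Finset.univ
  simp only [Finset.powerset_univ] at this
  rw [← this]
  simp

lemma qdist_eq_zero_imp {n : ℕ} (f : (Fin n → Bool) → ℝ) (hf : IsBooleanFn f)
    (S : Finset (Fin n)) (hq : qdist f S = 0) : bFourier f S ^ 2 = 0 := by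
  rw [qdist, Finset.prod_eq_zero_iff] at hq
  obtain ⟨k, -, hk⟩ := hq
  by_cases hkS : k ∈ S
  · rw [if_pos hkS] at hk
    have := p_le_I f hkS
    nlinarith [sq_nonneg (bFourier f S)]
  · rw [if_neg hkS] at hk
    have := p_le_one_sub f hf hkS
    nlinarith [sq_nonneg (bFourier f S)]

lemma qdist_nonneg {n : ℕ} (f : (Fin n → Bool) → ℝ) (hf : IsBooleanFn f)
    (S : Finset (Fin n)) : 0 ≤ qdist f S :=
  Finset.prod_nonneg fun k _ => by
    by_cases h : k ∈ S
    · simp [h, inflS_nonneg]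
    · simp [h]
      have := inflS_le_one f hf k
      linarith

lemma log_qdist {n : ℕ} (f : (Fin n → Bool) → ℝ) (hf : IsBooleanFn f)
    (S : Finset (Fin n)) (hS : bFourier f S ^ 2 ≠ 0) :
    Real.log (qdist f S)
      = ∑ k : Fin n, (if k ∈ S then Real.log (inflS f k) else Real.log (1 - inflS f k)) := by
  have hpos : ∀ k : Fin n, (if k ∈ S then inflS f k else 1 - inflS f k) ≠ 0 := by
    intro k
    by_cases h : k ∈ S
    · rw [if_pos h]
      intro h0
      exact hS (le_antisymm (h0 ▸ p_le_I f h) (sq_nonneg _))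
    · rw [if_neg h]
      intro h0
      exact hS (le_antisymm (h0 ▸ p_le_one_sub f hf h) (sq_nonneg _))
  rw [qdist, Real.log_prod (fun k _ => hpos k)]
  apply Finset.sum_congr rfl
  intro k _
  by_cases h : k ∈ S <;> simp [h]

lemma cross_entropy_eq {n : ℕ} (f : (Fin n → Bool) → ℝ) (hf : IsBooleanFn f) :
    ∑ S : Finset (Fin n), -(bFourier f S ^ 2 * Real.log (qdist f S))
      = ∑ k : Fin n, (-(inflS f k * Real.log (inflS f k))
          + -((1 - inflS f k) * Real.log (1 - inflS f k))) := by
  have h1 : ∀ S : Finset (Fin n), -(bFourier f S ^ 2 * Real.log (qdist f S))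
      = ∑ k : Fin n, -(bFourier f S ^ 2 *
          (if k ∈ S then Real.log (inflS f k) else Real.log (1 - inflS f k))) := by
    intro S
    by_cases hS : bFourier f S ^ 2 = 0
    · simp [hS]
    · rw [log_qdist f hf S hS, Finset.mul_sum, ← Finset.sum_neg_distrib]
  simp only [h1]
  rw [Finset.sum_comm]
  apply Finset.sum_congr rfl
  intro k _
  have h2 : ∀ S : Finset (Fin n), -(bFourier f S ^ 2 *
      (if k ∈ S then Real.log (inflS f k) else Real.log (1 - inflS f k)))
      = (if k ∈ S then -(bFourier f S ^ 2 * Real.log (inflS f k))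
          else -(bFourier f S ^ 2 * Real.log (1 - inflS f k))) := by
    intro S; by_cases h : k ∈ S <;> simp [h]
  simp only [h2]
  rw [Finset.sum_ite]
  congr 1
  · rw [Finset.sum_neg_distrib, ← Finset.sum_mul]
    rw [← inflS]
  · rw [Finset.sum_neg_distrib, ← Finset.sum_mul]
    have hcompl : (Finset.univ.filter fun S : Finset (Fin n) => ¬ k ∈ S)
        = Finset.univ.filter fun S : Finset (Fin n) => k ∉ S := rfl
    rw [hcompl, sum_not_mem f hf k]

lemma totInfl_eq {n : ℕ} (f : (Fin n → Bool) → ℝ) :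
    totInfl f = ∑ k : Fin n, inflS f k := by
  rw [totInfl]
  have h : ∀ S : Finset (Fin n), (S.card : ℝ) * bFourier f S ^ 2
      = ∑ k : Fin n, (if k ∈ S then bFourier f S ^ 2 else 0) := by
    intro S
    rw [Finset.sum_ite_mem, Finset.univ_inter, Finset.sum_const, nsmul_eq_mul]
  simp only [h]
  rw [Finset.sum_comm]
  apply Finset.sum_congr rfl
  intro k _
  rw [inflS, Finset.sum_filter]

lemma specEnt_eq {n : ℕ} (f : (Fin n → Bool) → ℝ) :
    specEnt f = (Real.log 2)⁻¹ *
      ∑ S : Finset (Fin n), -(bFourier f S ^ 2 * Real.log (bFourier f S ^ 2)) := by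
  rw [specEnt, Finset.mul_sum]
  apply Finset.sum_congr rfl
  intro S _
  rw [Real.logb, one_div, Real.log_inv, div_eq_mul_inv]
  ring

theorem entropy_influence_bound :
    ∃ c₁ c₂ : ℝ, 0 < c₁ ∧ 0 < c₂ ∧
      ∀ (n : ℕ) (f : (Fin n → Bool) → ℝ), IsBooleanFn f →
        specEnt f ≤ c₁ * totInfl f
          + c₂ * ∑ k : Fin n, -(inflS f k * Real.log (inflS f k)) := by
  refine ⟨(Real.log 2)⁻¹, (Real.log 2)⁻¹, ?_, ?_, ?_⟩
  · simp [Real.log_pos (by norm_num : (1:ℝ) < 2)]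
  · simp [Real.log_pos (by norm_num : (1:ℝ) < 2)]
  intro n f hf
  have hL : (0:ℝ) < (Real.log 2)⁻¹ := by
    simp [Real.log_pos (by norm_num : (1:ℝ) < 2)]
  have hgibbs := gibbs (fun S : Finset (Fin n) => bFourier f S ^ 2) (qdist f)
    (fun S => sq_nonneg _) (fun S => qdist_eq_zero_imp f hf S)
    (fun S => qdist_nonneg f hf S)
    (by rw [qdist_sum f, parseval f hf])
  have hce := cross_entropy_eq f hf
  have hsum : ∑ k : Fin n, (-(inflS f k * Real.log (inflS f k))
      + -((1 - inflS f k) * Real.log (1 - inflS f k)))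
      ≤ totInfl f + ∑ k : Fin n, -(inflS f k * Real.log (inflS f k)) := by
    rw [totInfl_eq f, ← Finset.sum_add_distrib]
    apply Finset.sum_le_sum
    intro k _
    have h2 := one_sub_entropy_le (inflS_nonneg f k) (inflS_le_one f hf k)
    nlinarith [h2]
  calc specEnt f
      = (Real.log 2)⁻¹ * ∑ S : Finset (Fin n), -(bFourier f S ^ 2 * Real.log (bFourier f S ^ 2)) :=
        specEnt_eq f
    _ ≤ (Real.log 2)⁻¹ * ∑ S : Finset (Fin n), -(bFourier f S ^ 2 * Real.log (qdist f S)) :=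
        mul_le_mul_of_nonneg_left hgibbs (le_of_lt hL)
    _ = (Real.log 2)⁻¹ * ∑ k : Fin n, (-(inflS f k * Real.log (inflS f k))
          + -((1 - inflS f k) * Real.log (1 - inflS f k))) := by rw [hce]
    _ ≤ (Real.log 2)⁻¹ * (totInfl f + ∑ k : Fin n, -(inflS f k * Real.log (inflS f k))) :=
        mul_le_mul_of_nonneg_left hsum (le_of_lt hL)
    _ = (Real.log 2)⁻¹ * totInfl f
          + (Real.log 2)⁻¹ * ∑ k : Fin n, -(inflS f k * Real.log (inflS f k)) := by ring
end
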